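/- arXiv:1812.03775 — 3 statements merged into one kernel-verified Lean document; each statement's English description precedes it below -/
import Mathlib

section
/- Let Σ be a symmetric positive definite p × p real matrix, μ ∈ ℝ^p, p₁, p₋₁ > 0 with p₁ + p₋₁ = 1, and β ∈ ℝ^p with β ≠ 0. Set a = β^T μ / √(β^T Σ β). Let F₁ and F₋₁ be the CDFs of the one-dimensional Gaussian measures with means β^T μ and −β^T μ respectively, both with variance β^T Σ β; let ν = p₁·N(β^T μ, β^T Σ β) + p₋₁·N(−β^T μ, β^T Σ β) be the mixture measure and F = p₁F₁ + p₋₁F₋₁ its CDF. Then p₁·∫(F₁ − F)² dν + p₋₁·∫(F₋₁ − F)² dν = p₁·p₋₁·∫_ℝ ( Φ(t) − Φ(t + 2a) )² dγ₀(t). -/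
open MeasureTheory ProbabilityTheory Matrix
open scoped NNReal ENNReal

/-- The cumulative distribution function of the standard Gaussian measure. -/
noncomputable def stdGaussianCDF (t : ℝ) : ℝ :=
  ((gaussianReal 0 1) (Set.Iic t)).toReal

namespace MVaux

lemma phi_nonneg (t : ℝ) : 0 ≤ stdGaussianCDF t := ENNReal.toReal_nonneg

lemma phi_le_one (t : ℝ) : stdGaussianCDF t ≤ 1 := by
  unfold stdGaussianCDF
  have h := prob_le_one (μ := gaussianReal 0 1) (s := Set.Iic t)
  calc ((gaussianReal 0 1) (Set.Iic t)).toReal ≤ (1 : ℝ≥0∞).toReal :=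
        ENNReal.toReal_mono (by simp) h
    _ = 1 := by simp

lemma phi_monotone : Monotone stdGaussianCDF := fun _ _ hab =>
  ENNReal.toReal_mono (measure_ne_top _ _) (measure_mono (Set.Iic_subset_Iic.2 hab))

lemma phi_measurable : Measurable stdGaussianCDF := phi_monotone.measurable

lemma map_neg_gauss : (gaussianReal 0 1).map (fun t => -t) = gaussianReal 0 1 := by
  have h := gaussianReal_map_const_mul (μ := 0) (v := 1) (-1)
  have h2 : (fun t : ℝ => (-1 : ℝ) * t) = fun t => -t := by funext t; ring
  rw [h2] at h
  rw [h]
  congr 1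
  · ring
  · ext; norm_num

lemma gauss_singleton (x : ℝ) : (gaussianReal 0 1) {x} = 0 :=
  gaussianReal_absolutelyContinuous 0 one_ne_zero (measure_singleton x)

lemma phi_neg (x : ℝ) : stdGaussianCDF (-x) = 1 - stdGaussianCDF x := by
  have h1 : (gaussianReal 0 1) (Set.Iic (-x)) = (gaussianReal 0 1) (Set.Ici x) := by
    conv_lhs => rw [← map_neg_gauss]
    rw [Measure.map_apply measurable_neg measurableSet_Iic]
    congr 1
    ext t
    simp [neg_le]
  have h2 : (gaussianReal 0 1) (Set.Iic x) = (gaussianReal 0 1) (Set.Iio x) := by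
    refine le_antisymm ?_ (measure_mono Set.Iio_subset_Iic_self)
    calc (gaussianReal 0 1) (Set.Iic x) = (gaussianReal 0 1) (Set.Iio x ∪ {x}) := by
          rw [Set.Iio_union_right]
      _ ≤ (gaussianReal 0 1) (Set.Iio x) + (gaussianReal 0 1) {x} := measure_union_le _ _
      _ = (gaussianReal 0 1) (Set.Iio x) := by rw [gauss_singleton, add_zero]
  have h3 : (gaussianReal 0 1) (Set.Ici x) = 1 - (gaussianReal 0 1) (Set.Iio x) := by
    rw [← Set.compl_Iio, measure_compl measurableSet_Iio (measure_ne_top _ _)]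
    simp
  unfold stdGaussianCDF
  rw [h1, h3, h2, ENNReal.toReal_sub_of_le prob_le_one (by simp)]
  simp

lemma map_affine (m : ℝ) {s : ℝ} (hs : 0 < s) :
    (gaussianReal 0 1).map (fun t => s * t + m)
      = gaussianReal m (⟨s ^ 2, sq_nonneg s⟩ : ℝ≥0) := by
  have h1 : (fun t : ℝ => s * t + m) = (fun x => x + m) ∘ (fun t => s * t) := rfl
  rw [h1, ← Measure.map_map (measurable_add_const m) (measurable_const_mul s),
    gaussianReal_map_const_mul, gaussianReal_map_add_const]
  congr 1
  · ring
  · apply NNReal.coe_injective; push_cast; exact mul_one _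

lemma cdf_eq (m : ℝ) {s : ℝ} (hs : 0 < s) (z : ℝ) :
    ((gaussianReal m (⟨s ^ 2, sq_nonneg s⟩ : ℝ≥0)) (Set.Iic z)).toReal
      = stdGaussianCDF ((z - m) / s) := by
  rw [← map_affine m hs, Measure.map_apply (by fun_prop) measurableSet_Iic]
  unfold stdGaussianCDF
  congr 2
  ext t
  simp only [Set.mem_preimage, Set.mem_Iic]
  rw [le_div_iff₀ hs]
  constructor <;> intro h <;> nlinarith

end MVaux

/-- The mean-variance index of the projection `βᵀX` in the two-class Gaussian model,
the central computation of the proof of Theorem 2 of the paper. -/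
theorem mv_index_two_class_gaussian {p : ℕ}
    (Sig : Matrix (Fin p) (Fin p) ℝ) (hSig : Sig.PosDef)
    (μ : Fin p → ℝ)
    (p₁ p₂ : ℝ) (hp₁ : 0 < p₁) (hp₂ : 0 < p₂) (hsum : p₁ + p₂ = 1)
    (β : Fin p → ℝ) (hβ : β ≠ 0)
    (a : ℝ) (ha : a = β ⬝ᵥ μ / Real.sqrt (β ⬝ᵥ Sig.mulVec β))
    (F₁ F₂ F : ℝ → ℝ)
    (hF₁ : ∀ z, F₁ z =
      ((gaussianReal (β ⬝ᵥ μ) ((β ⬝ᵥ Sig.mulVec β).toNNReal)) (Set.Iic z)).toReal)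
    (hF₂ : ∀ z, F₂ z =
      ((gaussianReal (-(β ⬝ᵥ μ)) ((β ⬝ᵥ Sig.mulVec β).toNNReal)) (Set.Iic z)).toReal)
    (hF : ∀ z, F z = p₁ * F₁ z + p₂ * F₂ z)
    (ν : Measure ℝ)
    (hν : ν = ENNReal.ofReal p₁ • gaussianReal (β ⬝ᵥ μ) ((β ⬝ᵥ Sig.mulVec β).toNNReal)
            + ENNReal.ofReal p₂ • gaussianReal (-(β ⬝ᵥ μ)) ((β ⬝ᵥ Sig.mulVec β).toNNReal)) :
    p₁ * ∫ z, (F₁ z - F z) ^ 2 ∂ν + p₂ * ∫ z, (F₂ z - F z) ^ 2 ∂ν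
      = p₁ * p₂ *
        ∫ t, (stdGaussianCDF t - stdGaussianCDF (t + 2 * a)) ^ 2 ∂(gaussianReal 0 1) := by
  set m := β ⬝ᵥ μ with hm
  set v := β ⬝ᵥ Sig.mulVec β with hvdef
  have hv : 0 < v := by
    have h := hSig.dotProduct_mulVec_pos hβ
    simpa using h
  set s := Real.sqrt v with hsdef
  have hs : 0 < s := Real.sqrt_pos.2 hv
  have hs2 : s ^ 2 = v := Real.sq_sqrt hv.le
  have hvNN : v.toNNReal = (⟨s ^ 2, sq_nonneg s⟩ : ℝ≥0) := by
    apply NNReal.coe_injective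
    simp [Real.coe_toNNReal _ hv.le, hs2]; rfl
  have hF₁' : ∀ z, F₁ z = stdGaussianCDF ((z - m) / s) := fun z => by
    rw [hF₁ z, hvNN, MVaux.cdf_eq m hs]
  have hF₂' : ∀ z, F₂ z = stdGaussianCDF ((z + m) / s) := fun z => by
    rw [hF₂ z, hvNN, MVaux.cdf_eq (-m) hs, sub_neg_eq_add]
  -- bound on the difference
  have hDb : ∀ z, |F₁ z - F₂ z| ≤ 1 := fun z => by
    rw [hF₁' z, hF₂' z]
    have h1 := MVaux.phi_nonneg ((z - m) / s); have h2 := MVaux.phi_le_one ((z - m) / s)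
    have h3 := MVaux.phi_nonneg ((z + m) / s); have h4 := MVaux.phi_le_one ((z + m) / s)
    rw [abs_le]; constructor <;> linarith
  -- measurability
  have hmF₁ : Measurable F₁ := by
    rw [funext hF₁']
    exact MVaux.phi_measurable.comp (by fun_prop)
  have hmF₂ : Measurable F₂ := by
    rw [funext hF₂']
    exact MVaux.phi_measurable.comp (by fun_prop)
  have hmeasD : Measurable fun z => (F₁ z - F₂ z) ^ 2 := by fun_prop
  -- the Gaussians as affine pushforwards of the standard Gaussian
  have hN1 : gaussianReal m v.toNNReal = (gaussianReal 0 1).map (fun t => s * t + m) := by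
    rw [hvNN, MVaux.map_affine m hs]
  have hN2 : gaussianReal (-m) v.toNNReal = (gaussianReal 0 1).map (fun t => s * t + -m) := by
    rw [hvNN, MVaux.map_affine (-m) hs]
  have ha' : a = m / s := ha
  -- pointwise compositions
  have hcomp1 : ∀ t, (F₁ (s * t + m) - F₂ (s * t + m)) ^ 2
      = (stdGaussianCDF t - stdGaussianCDF (t + 2 * a)) ^ 2 := fun t => by
    have e1 : (s * t + m - m) / s = t := by field_simp; ring
    have e2 : (s * t + m + m) / s = t + 2 * a := by
      rw [ha']; field_simp; ring
    rw [hF₁', hF₂', e1, e2]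
  have hcomp2 : ∀ t, (F₁ (s * t + -m) - F₂ (s * t + -m)) ^ 2
      = (stdGaussianCDF (t - 2 * a) - stdGaussianCDF t) ^ 2 := fun t => by
    have e1 : (s * t + -m - m) / s = t - 2 * a := by
      rw [ha']; field_simp; ring
    have e2 : (s * t + -m + m) / s = t := by field_simp; ring
    rw [hF₁', hF₂', e1, e2]
  -- integrability
  have hintg1 : Integrable (fun z => (F₁ z - F₂ z) ^ 2) (gaussianReal m v.toNNReal) := by
    refine (integrable_const (1 : ℝ)).mono' hmeasD.aestronglyMeasurable
      (ae_of_all _ fun z => ?_)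
    rw [Real.norm_eq_abs, abs_pow]
    exact pow_le_one₀ (abs_nonneg _) (hDb z)
  have hintg2 : Integrable (fun z => (F₁ z - F₂ z) ^ 2) (gaussianReal (-m) v.toNNReal) := by
    refine (integrable_const (1 : ℝ)).mono' hmeasD.aestronglyMeasurable
      (ae_of_all _ fun z => ?_)
    rw [Real.norm_eq_abs, abs_pow]
    exact pow_le_one₀ (abs_nonneg _) (hDb z)
  -- change of variables
  have hint1 : ∫ z, (F₁ z - F₂ z) ^ 2 ∂(gaussianReal m v.toNNReal)
      = ∫ t, (stdGaussianCDF t - stdGaussianCDF (t + 2 * a)) ^ 2 ∂(gaussianReal 0 1) := by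
    rw [hN1, integral_map (by fun_prop : Measurable fun t : ℝ => s * t + m).aemeasurable
      (hN1 ▸ hmeasD.aestronglyMeasurable)]
    exact integral_congr_ae (ae_of_all _ hcomp1)
  have hmeasG : Measurable fun t => (stdGaussianCDF (t - 2 * a) - stdGaussianCDF t) ^ 2 := by
    have := MVaux.phi_measurable
    fun_prop
  have hint2 : ∫ z, (F₁ z - F₂ z) ^ 2 ∂(gaussianReal (-m) v.toNNReal)
      = ∫ t, (stdGaussianCDF (t - 2 * a) - stdGaussianCDF t) ^ 2 ∂(gaussianReal 0 1) := by
    rw [hN2, integral_map (by fun_prop : Measurable fun t : ℝ => s * t + -m).aemeasurable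
      (hN2 ▸ hmeasD.aestronglyMeasurable)]
    exact integral_congr_ae (ae_of_all _ hcomp2)
  have hsym : ∫ t, (stdGaussianCDF (t - 2 * a) - stdGaussianCDF t) ^ 2 ∂(gaussianReal 0 1)
      = ∫ t, (stdGaussianCDF t - stdGaussianCDF (t + 2 * a)) ^ 2 ∂(gaussianReal 0 1) := by
    conv_lhs => rw [← MVaux.map_neg_gauss]
    rw [integral_map measurable_neg.aemeasurable
      (MVaux.map_neg_gauss ▸ hmeasG.aestronglyMeasurable)]
    refine integral_congr_ae (ae_of_all _ fun t => ?_)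
    show (stdGaussianCDF (-t - 2 * a) - stdGaussianCDF (-t)) ^ 2
        = (stdGaussianCDF t - stdGaussianCDF (t + 2 * a)) ^ 2
    have e : -t - 2 * a = -(t + 2 * a) := by ring
    rw [e, MVaux.phi_neg, MVaux.phi_neg]
    ring
  -- the mixture integral
  have hI : ∫ z, (F₁ z - F₂ z) ^ 2 ∂ν
      = ∫ t, (stdGaussianCDF t - stdGaussianCDF (t + 2 * a)) ^ 2 ∂(gaussianReal 0 1) := by
    rw [hν, integral_add_measure (hintg1.smul_measure ENNReal.ofReal_ne_top)
        (hintg2.smul_measure ENNReal.ofReal_ne_top),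
      integral_smul_measure, integral_smul_measure,
      ENNReal.toReal_ofReal hp₁.le, ENNReal.toReal_ofReal hp₂.le,
      smul_eq_mul, smul_eq_mul, hint1, hint2, hsym]
    linear_combination (∫ t, (stdGaussianCDF t - stdGaussianCDF (t + 2 * a)) ^ 2
      ∂(gaussianReal 0 1)) * hsum
  -- rewrite the two integrands
  have e1 : ∀ z, (F₁ z - F z) ^ 2 = p₂ ^ 2 * (F₁ z - F₂ z) ^ 2 := fun z => by
    rw [hF]
    have h : F₁ z - (p₁ * F₁ z + p₂ * F₂ z) = p₂ * (F₁ z - F₂ z) := by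
      linear_combination (-(F₁ z)) * hsum
    rw [h]; ring
  have e2 : ∀ z, (F₂ z - F z) ^ 2 = p₁ ^ 2 * (F₁ z - F₂ z) ^ 2 := fun z => by
    rw [hF]
    have h : F₂ z - (p₁ * F₁ z + p₂ * F₂ z) = p₁ * (F₂ z - F₁ z) := by
      linear_combination (-(F₂ z)) * hsum
    rw [h]; ring
  have hI1 : ∫ z, (F₁ z - F z) ^ 2 ∂ν = p₂ ^ 2 * ∫ z, (F₁ z - F₂ z) ^ 2 ∂ν := by
    rw [← integral_const_mul]
    exact integral_congr_ae (ae_of_all _ e1)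
  have hI2 : ∫ z, (F₂ z - F z) ^ 2 ∂ν = p₁ ^ 2 * ∫ z, (F₁ z - F₂ z) ^ 2 ∂ν := by
    rw [← integral_const_mul]
    exact integral_congr_ae (ae_of_all _ e2)
  rw [hI1, hI2, hI]
  linear_combination (p₁ * p₂ * ∫ t, (stdGaussianCDF t - stdGaussianCDF (t + 2 * a)) ^ 2
    ∂(gaussianReal 0 1)) * hsum
end

section
/- Let (Ω, ℱ, P) be a probability space whose underlying space is standard Borel, X : Ω → ℝ^p a random vector, Y a random element taking values in a standard Borel space, B : ℝ^p → ℝ^k a linear map, and γ ∈ ℝ^p. If (i) Y and X are conditionally independent given B X, and (ii) the random variable ⟪γ, X⟫ is independent of the random vector B X, then ⟪γ, X⟫ is independent of Y. -/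
open MeasureTheory ProbabilityTheory RealInnerProductSpace

/-- Key probabilistic claim of Section 3.2 of the paper: under the index model
`Y ⫫ X | BX`, any direction `γ` with `⟪γ, X⟫ ⫫ BX` satisfies `⟪γ, X⟫ ⫫ Y`. -/
theorem proj_indep_of_condIndep_index_model
    {Ω 𝒴 : Type*}
    [MeasurableSpace Ω] [StandardBorelSpace Ω] [Nonempty Ω]
    [MeasurableSpace 𝒴] [StandardBorelSpace 𝒴]
    (P : Measure Ω) [IsProbabilityMeasure P]
    {p k : ℕ} (X : Ω → EuclideanSpace ℝ (Fin p)) (Y : Ω → 𝒴)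
    (hX : Measurable X) (hY : Measurable Y)
    (B : EuclideanSpace ℝ (Fin p) →ₗ[ℝ] EuclideanSpace ℝ (Fin k))
    (γ : EuclideanSpace ℝ (Fin p))
    (hCI : CondIndepFun (MeasurableSpace.comap (fun ω => B (X ω)) inferInstance)
      (Measurable.comap_le ((B.continuous_of_finiteDimensional.measurable).comp hX)) Y X P)
    (hind : IndepFun (fun ω => ⟪γ, X ω⟫) (fun ω => B (X ω)) P) :
    IndepFun (fun ω => ⟪γ, X ω⟫) Y P := by
  set Z : Ω → EuclideanSpace ℝ (Fin k) := fun ω => B (X ω) with hZdef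
  set W : Ω → ℝ := fun ω => ⟪γ, X ω⟫ with hWdef
  have hZ : Measurable Z := (B.continuous_of_finiteDimensional.measurable).comp hX
  have hW : Measurable W := measurable_const.inner hX
  have hm' : MeasurableSpace.comap Z inferInstance ≤ _ := hZ.comap_le
  -- From Y ⫫ X | Z, deduce Y ⫫ W | Z by composing with the measurable map x ↦ ⟪γ, x⟫
  have hφ : Measurable fun x : EuclideanSpace ℝ (Fin p) => ⟪γ, x⟫ :=
    measurable_const.inner measurable_id
  have hCI' : CondIndepFun (MeasurableSpace.comap Z inferInstance) hm' Y W P :=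
    hCI.comp measurable_id hφ
  rw [condIndepFun_iff_condExp_inter_preimage_eq_mul hY hW] at hCI'
  -- Independence of W and Z at the σ-algebra level
  have hindep : ProbabilityTheory.Indep (MeasurableSpace.comap W inferInstance)
      (MeasurableSpace.comap Z inferInstance) P :=
    (IndepFun_iff_Indep W Z P).mp hind
  rw [indepFun_iff_measure_inter_preimage_eq_mul]
  intro s t hs ht
  -- E[1_{W⁻¹ s} | m'] is a.e. the constant P(W⁻¹ s)
  have hWs : MeasurableSet (W ⁻¹' s) := hW hs
  have hYt : MeasurableSet (Y ⁻¹' t) := hY ht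
  have hconst : (P⟦W ⁻¹' s | MeasurableSpace.comap Z inferInstance⟧) =ᵐ[P]
      fun _ => ∫ ω, (W ⁻¹' s).indicator (fun _ => (1 : ℝ)) ω ∂P := by
    refine condExp_indep_eq hW.comap_le hm' ?_ hindep
    exact stronglyMeasurable_const.indicator ⟨s, hs, rfl⟩
  have hint : ∫ ω, (W ⁻¹' s).indicator (fun _ => (1 : ℝ)) ω ∂P = (P (W ⁻¹' s)).toReal := by
    rw [integral_indicator hWs]; simp [measureReal_def]
  -- Integrate the conditional independence identity
  have key : (P (W ⁻¹' s ∩ Y ⁻¹' t)).toReal = (P (W ⁻¹' s)).toReal * (P (Y ⁻¹' t)).toReal := by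
    have h1 : (P (W ⁻¹' s ∩ Y ⁻¹' t)).toReal
        = ∫ ω, (P⟦Y ⁻¹' t ∩ W ⁻¹' s | MeasurableSpace.comap Z inferInstance⟧) ω ∂P := by
      rw [integral_condExp hm', integral_indicator (hYt.inter hWs)]
      simp [Set.inter_comm, measureReal_def]
    have h2 : ∫ ω, (P⟦Y ⁻¹' t ∩ W ⁻¹' s | MeasurableSpace.comap Z inferInstance⟧) ω ∂P
        = ∫ ω, (P⟦Y ⁻¹' t | MeasurableSpace.comap Z inferInstance⟧) ω * (P (W ⁻¹' s)).toReal ∂P := by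
      refine integral_congr_ae ?_
      filter_upwards [hCI' t s ht hs, hconst] with ω h₁ h₂
      rw [h₁, h₂, hint]
    rw [h1, h2, integral_mul_const, integral_condExp hm', integral_indicator hYt]
    simp [mul_comm, measureReal_def]
  have h1 : P (W ⁻¹' s ∩ Y ⁻¹' t) ≠ ⊤ := measure_ne_top _ _
  have h2 : P (W ⁻¹' s) * P (Y ⁻¹' t) ≠ ⊤ :=
    ENNReal.mul_ne_top (measure_ne_top _ _) (measure_ne_top _ _)
  rw [← ENNReal.toReal_eq_toReal_iff' h1 h2, key, ENNReal.toReal_mul]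
end

section
/- Let q ∈ ℕ, θ₀ ∈ ℝ^q, ρ > 0, and let L, L̃ : ℝ^q → ℝ be three times continuously differentiable on the closed ball B̄(θ₀, ρ). Assume: (i) ∇L(θ₀) = 0; (ii) there is c > 0 with u^T ∇²L(θ₀) u ≤ −c‖u‖² for all u ∈ ℝ^q; (iii) the operator norm ‖∇²L̃(θ₀) − ∇²L(θ₀)‖ ≤ c/4; (iv) the third-order derivative of L has norm bounded by M₁ on B̄(θ₀, ρ) and the third-order derivative of L − L̃ has norm bounded by M₂ on B̄(θ₀, ρ); (v) K > 0 and α > 0 satisfy ‖∇L̃(θ₀)‖ ≤ K·α. Then there exist constants C > 0 and α₀ > 0, depending only on c, K, M₁, M₂ and ρ, such that for every α ∈ (0, α₀]: L̃(θ₀ + α·u) < L̃(θ₀) for all u with ‖u‖ = C, and consequently L̃ attains a local maximum at some point θ̂ with ‖θ̂ − θ₀‖ ≤ C·α. -/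
open Metric

private noncomputable instance instNACG2 {E : Type*} [NormedAddCommGroup E] [NormedSpace ℝ E] :
    NormedAddCommGroup (E →L[ℝ] E →L[ℝ] ℝ) := inferInstance
private noncomputable instance instNS2 {E : Type*} [NormedAddCommGroup E] [NormedSpace ℝ E] :
    NormedSpace ℝ (E →L[ℝ] E →L[ℝ] ℝ) := inferInstance

private lemma third_deriv_bound {E : Type*} [NormedAddCommGroup E] [NormedSpace ℝ E]
    {θ₀ : E} {ρ M₁ M₂ : ℝ} {L Lt : E → ℝ}
    (hL : ContDiffOn ℝ 3 L (closedBall θ₀ ρ))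
    (hLt : ContDiffOn ℝ 3 Lt (closedBall θ₀ ρ))
    (hM₁ : ∀ θ ∈ closedBall θ₀ ρ, ‖iteratedFDeriv ℝ 3 L θ‖ ≤ M₁)
    (hM₂ : ∀ θ ∈ closedBall θ₀ ρ, ‖iteratedFDeriv ℝ 3 (fun x => L x - Lt x) θ‖ ≤ M₂)
    {y : E} (hy : y ∈ ball θ₀ ρ) :
    ‖fderiv ℝ (fderiv ℝ (fderiv ℝ Lt)) y‖ ≤ M₁ + M₂ := by
  have hsub : ball θ₀ ρ ⊆ closedBall θ₀ ρ := ball_subset_closedBall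
  have hLo : ContDiffOn ℝ ((3 : ℕ) : WithTop ℕ∞) L (ball θ₀ ρ) := by
    exact_mod_cast hL.mono hsub
  have hLto : ContDiffOn ℝ ((3 : ℕ) : WithTop ℕ∞) Lt (ball θ₀ ρ) := by
    exact_mod_cast hLt.mono hsub
  have hgo : ContDiffOn ℝ ((3 : ℕ) : WithTop ℕ∞) (fun x => L x - Lt x) (ball θ₀ ρ) :=
    hLo.sub hLto
  have hadd : iteratedFDerivWithin ℝ 3 (fun x => (L x - Lt x) + Lt x) (ball θ₀ ρ) y =
      iteratedFDerivWithin ℝ 3 (fun x => L x - Lt x) (ball θ₀ ρ) y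
        + iteratedFDerivWithin ℝ 3 Lt (ball θ₀ ρ) y :=
    iteratedFDerivWithin_add_apply' (hgo y hy) (hLto y hy) isOpen_ball.uniqueDiffOn hy
  have hfun : (fun x => (L x - Lt x) + Lt x) = L := by funext x; ring
  rw [hfun] at hadd
  have key : iteratedFDerivWithin ℝ 3 Lt (ball θ₀ ρ) y =
      iteratedFDerivWithin ℝ 3 L (ball θ₀ ρ) y
        - iteratedFDerivWithin ℝ 3 (fun x => L x - Lt x) (ball θ₀ ρ) y := by
    rw [hadd]; abel
  have h1 : ‖fderiv ℝ (fderiv ℝ (fderiv ℝ Lt)) y‖ = ‖iteratedFDeriv ℝ 3 Lt y‖ := by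
    rw [← norm_iteratedFDeriv_fderiv, ← norm_iteratedFDeriv_fderiv,
      ← norm_iteratedFDeriv_zero (𝕜 := ℝ) (f := fderiv ℝ (fderiv ℝ (fderiv ℝ Lt))),
      norm_iteratedFDeriv_fderiv]
  rw [h1, ← iteratedFDerivWithin_of_isOpen 3 isOpen_ball hy, key]
  refine (norm_sub_le _ _).trans (add_le_add ?_ ?_)
  · rw [iteratedFDerivWithin_of_isOpen 3 isOpen_ball hy]; exact hM₁ y (hsub hy)
  · rw [iteratedFDerivWithin_of_isOpen 3 isOpen_ball hy]; exact hM₂ y (hsub hy)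

set_option maxHeartbeats 1000000 in
private lemma sphere_decrease {E : Type*} [NormedAddCommGroup E] [NormedSpace ℝ E]
    {c K M₁ M₂ ρ : ℝ} (hc : 0 < c) (hK : 0 < K) (hρ : 0 < ρ)
    {θ₀ : E} {L Lt : E → ℝ} {α : ℝ}
    (hL : ContDiffOn ℝ 3 L (closedBall θ₀ ρ))
    (hLt : ContDiffOn ℝ 3 Lt (closedBall θ₀ ρ))
    (hHess : ∀ u : E, (iteratedFDeriv ℝ 2 L θ₀) ![u, u] ≤ -c * ‖u‖ ^ 2)
    (hHd : ‖iteratedFDeriv ℝ 2 Lt θ₀ - iteratedFDeriv ℝ 2 L θ₀‖ ≤ c / 4)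
    (hM₁ : ∀ θ ∈ closedBall θ₀ ρ, ‖iteratedFDeriv ℝ 3 L θ‖ ≤ M₁)
    (hM₂ : ∀ θ ∈ closedBall θ₀ ρ, ‖iteratedFDeriv ℝ 3 (fun x => L x - Lt x) θ‖ ≤ M₂)
    (hα : 0 < α)
    (hαρ : α * (8 * K / c) ≤ ρ / 2)
    (hαM : (max (M₁ + M₂) 0) * (8 * K / c) ^ 3 * α ≤ 8 * K ^ 2 / c)
    (hgrad : ‖fderiv ℝ Lt θ₀‖ ≤ K * α)
    {v : E} (hv : ‖v‖ = α * (8 * K / c)) :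
    Lt (θ₀ + v) < Lt θ₀ := by
  have hM₃0 : (0:ℝ) ≤ max (M₁ + M₂) 0 := le_max_right _ _
  set M₃ : ℝ := max (M₁ + M₂) 0 with hM₃def
  have hC0 : (0:ℝ) < 8 * K / c := by positivity
  set C : ℝ := 8 * K / c with hCdef
  set r : ℝ := α * C with hrdef
  have hr0 : 0 < r := mul_pos hα hC0
  have hrρ : r < ρ := lt_of_le_of_lt hαρ (by linarith)
  set s : Set E := closedBall θ₀ r with hsdef
  have hsub : s ⊆ ball θ₀ ρ := fun x hx =>
    mem_ball.2 (lt_of_le_of_lt (mem_closedBall.1 hx) hrρ)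
  have hat : ∀ y ∈ ball θ₀ ρ, ContDiffAt ℝ 3 Lt y := fun y hy =>
    hLt.contDiffAt (mem_nhds_iff.2 ⟨ball θ₀ ρ, ball_subset_closedBall, isOpen_ball, hy⟩)
  have hd0 : ∀ y ∈ ball θ₀ ρ, DifferentiableAt ℝ Lt y := fun y hy =>
    (hat y hy).differentiableAt (by norm_num)
  have hd1 : ∀ y ∈ ball θ₀ ρ, DifferentiableAt ℝ (fderiv ℝ Lt) y := fun y hy =>
    ((hat y hy).fderiv_right (m := 2) (by norm_num)).differentiableAt (by norm_num)
  have hd2 : ∀ y ∈ ball θ₀ ρ, DifferentiableAt ℝ (fderiv ℝ (fderiv ℝ Lt)) y := fun y hy =>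
    (((hat y hy).fderiv_right (m := 2) (by norm_num)).fderiv_right (m := 1)
      (by norm_num)).differentiableAt (by norm_num)
  set A : E →L[ℝ] ℝ := fderiv ℝ Lt θ₀ with hAdef
  set B : E →L[ℝ] E →L[ℝ] ℝ := fderiv ℝ (fderiv ℝ Lt) θ₀ with hBdef
  have hθ₀s : θ₀ ∈ s := mem_closedBall_self hr0.le
  have hθ₀b : θ₀ ∈ ball θ₀ ρ := mem_ball_self hρ
  have hsymm : ∀ w z : E, B w z = B z w := fun w z =>
    ((hat θ₀ hθ₀b).isSymmSndFDerivAt (by norm_num)).eq w z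
  have hconv : Convex ℝ s := convex_closedBall θ₀ r
  have h3 : ∀ y ∈ s, ‖fderiv ℝ (fderiv ℝ (fderiv ℝ Lt)) y‖ ≤ M₃ := fun y hy =>
    (third_deriv_bound hL hLt hM₁ hM₂ (hsub hy)).trans (le_max_left _ _)
  have hstep1 : ∀ y ∈ s, ‖fderiv ℝ (fderiv ℝ Lt) y - B‖ ≤ M₃ * r := by
    intro y hy
    have hmvt := hconv.norm_image_sub_le_of_norm_fderiv_le
      (fun x hx => hd2 x (hsub hx)) h3 hθ₀s hy
    refine hmvt.trans ?_
    have hyr : ‖y - θ₀‖ ≤ r := by rwa [← dist_eq_norm, ← mem_closedBall]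
    exact mul_le_mul_of_nonneg_left hyr hM₃0
  have hstep2 : ∀ y ∈ s, ‖fderiv ℝ Lt y - (A + B (y - θ₀))‖ ≤ M₃ * r * r := by
    have hG : ∀ y ∈ s, HasFDerivWithinAt (fun z => fderiv ℝ Lt z - B (z - θ₀))
        (fderiv ℝ (fderiv ℝ Lt) y - B) s y := by
      intro y hy
      have h1 : HasFDerivAt (fderiv ℝ Lt) (fderiv ℝ (fderiv ℝ Lt) y) y :=
        (hd1 y (hsub hy)).hasFDerivAt
      have h2 : HasFDerivAt (fun z : E => B (z - θ₀)) B y := by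
        have heq : (fun z : E => B (z - θ₀)) = fun z : E => B z - B θ₀ := by
          funext z; simp [map_sub]
        rw [heq]
        exact B.hasFDerivAt.sub_const (B θ₀)
      exact (h1.sub h2).hasFDerivWithinAt
    intro y hy
    have hmvt := hconv.norm_image_sub_le_of_norm_hasFDerivWithin_le hG
      (fun x hx => hstep1 x hx) hθ₀s hy
    have hyr : ‖y - θ₀‖ ≤ r := by rwa [← dist_eq_norm, ← mem_closedBall]
    have hform : fderiv ℝ Lt y - (A + B (y - θ₀)) =
        (fderiv ℝ Lt y - B (y - θ₀)) - (fderiv ℝ Lt θ₀ - B (θ₀ - θ₀)) := by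
      rw [← hAdef]; simp; abel
    rw [hform]
    exact hmvt.trans (mul_le_mul_of_nonneg_left hyr (by positivity))
  have hstep3 : ∀ x ∈ s,
      ‖Lt x - (A (x - θ₀) + (1/2 : ℝ) * B (x - θ₀) (x - θ₀)) - Lt θ₀‖
        ≤ M₃ * r * r * r := by
    have hF : ∀ y ∈ s, HasFDerivWithinAt
        (fun z => Lt z - (A (z - θ₀) + (1/2 : ℝ) * B (z - θ₀) (z - θ₀)))
        (fderiv ℝ Lt y - (A + B (y - θ₀))) s y := by
      intro y hy
      have h0 : HasFDerivAt Lt (fderiv ℝ Lt y) y := (hd0 y (hsub hy)).hasFDerivAt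
      have hA : HasFDerivAt (fun z : E => A (z - θ₀)) (A : E →L[ℝ] ℝ) y := by
        have heq : (fun z : E => A (z - θ₀)) = fun z : E => A z - A θ₀ := by
          funext z; simp [map_sub]
        rw [heq]; exact A.hasFDerivAt.sub_const (A θ₀)
      have hBz : HasFDerivAt (fun z : E => B (z - θ₀)) B y := by
        have heq : (fun z : E => B (z - θ₀)) = fun z : E => B z - B θ₀ := by
          funext z; simp [map_sub]
        rw [heq]; exact B.hasFDerivAt.sub_const (B θ₀)
      have hz : HasFDerivAt (fun z : E => z - θ₀) (ContinuousLinearMap.id ℝ E) y :=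
        (hasFDerivAt_id y).sub_const θ₀
      have hq : HasFDerivAt (fun z : E => B (z - θ₀) (z - θ₀))
          ((B (y - θ₀)).comp (ContinuousLinearMap.id ℝ E) + B.flip (y - θ₀)) y :=
        hBz.clm_apply hz
      have hq2 : HasFDerivAt (fun z : E => A (z - θ₀) + (1/2 : ℝ) * B (z - θ₀) (z - θ₀))
          (A + B (y - θ₀)) y := by
        have hcomb := hA.add (hq.const_mul (1/2 : ℝ))
        refine hcomb.congr_fderiv ?_
        ext h
        have h2 := hsymm h y
        have h3 := hsymm h θ₀
        simp only [ContinuousLinearMap.add_apply, ContinuousLinearMap.smul_apply,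
          ContinuousLinearMap.comp_apply, ContinuousLinearMap.flip_apply,
          ContinuousLinearMap.coe_id', id_eq, map_sub, ContinuousLinearMap.sub_apply,
          smul_eq_mul]
        linarith
      exact (h0.sub hq2).hasFDerivWithinAt
    intro x hx
    have hmvt := hconv.norm_image_sub_le_of_norm_hasFDerivWithin_le hF
      (fun y hy => hstep2 y hy) hθ₀s hx
    have hxr : ‖x - θ₀‖ ≤ r := by rwa [← dist_eq_norm, ← mem_closedBall]
    have hform : Lt x - (A (x - θ₀) + (1/2 : ℝ) * B (x - θ₀) (x - θ₀)) - Lt θ₀ =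
        (Lt x - (A (x - θ₀) + (1/2 : ℝ) * B (x - θ₀) (x - θ₀)))
          - (Lt θ₀ - (A (θ₀ - θ₀) + (1/2 : ℝ) * B (θ₀ - θ₀) (θ₀ - θ₀))) := by
      simp
    rw [hform]
    exact hmvt.trans (mul_le_mul_of_nonneg_left hxr (by positivity))
  -- apply at x = θ₀ + v
  have hvr : ‖v‖ = r := hv
  have hxs : θ₀ + v ∈ s := by
    rw [hsdef, mem_closedBall, dist_eq_norm, add_sub_cancel_left, hvr]
  have hkey := hstep3 (θ₀ + v) hxs
  rw [add_sub_cancel_left] at hkey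
  have habs : Lt (θ₀ + v) - Lt θ₀ ≤ A v + (1/2 : ℝ) * B v v + M₃ * r * r * r := by
    have h1 : Lt (θ₀ + v) - (A v + (1/2 : ℝ) * B v v) - Lt θ₀
        ≤ ‖Lt (θ₀ + v) - (A v + (1/2 : ℝ) * B v v) - Lt θ₀‖ := le_abs_self _
    have := h1.trans hkey
    linarith
  have hAv : A v ≤ K * α * r := by
    have h1 : A v ≤ ‖A v‖ := le_abs_self _
    have h2 : ‖A v‖ ≤ ‖A‖ * ‖v‖ := A.le_opNorm v
    have h3 : ‖A‖ * ‖v‖ ≤ (K * α) * r := by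
      rw [hvr]
      exact mul_le_mul_of_nonneg_right hgrad (le_of_lt hr0) |>.trans le_rfl
    linarith
  have hBvv : B v v ≤ -c * r ^ 2 + c / 4 * r ^ 2 := by
    have he : iteratedFDeriv ℝ 2 Lt θ₀ ![v, v] = B v v := by
      rw [iteratedFDeriv_two_apply]
      simp [hBdef]
    have hsplit : iteratedFDeriv ℝ 2 Lt θ₀ ![v, v] = iteratedFDeriv ℝ 2 L θ₀ ![v, v]
        + (iteratedFDeriv ℝ 2 Lt θ₀ - iteratedFDeriv ℝ 2 L θ₀) ![v, v] := by
      simp [ContinuousMultilinearMap.sub_apply]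
    have h1 := hHess v
    have h2 : (iteratedFDeriv ℝ 2 Lt θ₀ - iteratedFDeriv ℝ 2 L θ₀) ![v, v]
        ≤ c / 4 * (‖v‖ * ‖v‖) := by
      have hle := (iteratedFDeriv ℝ 2 Lt θ₀ - iteratedFDeriv ℝ 2 L θ₀).le_opNorm ![v, v]
      have hprod : (∏ i, ‖(![v, v]) i‖) = ‖v‖ * ‖v‖ := by
        simp [Fin.prod_univ_two]
      rw [hprod] at hle
      have h4 : (iteratedFDeriv ℝ 2 Lt θ₀ - iteratedFDeriv ℝ 2 L θ₀) ![v, v]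
          ≤ ‖(iteratedFDeriv ℝ 2 Lt θ₀ - iteratedFDeriv ℝ 2 L θ₀) ![v, v]‖ := le_abs_self _
      have h5 : ‖iteratedFDeriv ℝ 2 Lt θ₀ - iteratedFDeriv ℝ 2 L θ₀‖ * (‖v‖ * ‖v‖)
          ≤ c / 4 * (‖v‖ * ‖v‖) :=
        mul_le_mul_of_nonneg_right hHd (by positivity)
      linarith
    have hv2 : ‖v‖ ^ 2 = r ^ 2 := by rw [hvr]
    have hvv : ‖v‖ * ‖v‖ = r ^ 2 := by rw [hvr]; ring
    rw [hvv] at h2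
    rw [hv2] at h1
    linarith [he ▸ (hsplit ▸ add_le_add h1 h2)]
  -- numeric conclusion
  have hc' : c ≠ 0 := ne_of_gt hc
  have e1 : K * α * r = 8 * (K ^ 2 / c * α ^ 2) := by
    rw [hrdef, hCdef]; field_simp
  have e2 : c * r ^ 2 = 64 * (K ^ 2 / c * α ^ 2) := by
    rw [hrdef, hCdef]; field_simp; ring
  have e3 : M₃ * r * r * r ≤ 8 * (K ^ 2 / c * α ^ 2) := by
    have h := mul_le_mul_of_nonneg_right hαM (sq_nonneg α)
    calc M₃ * r * r * r = (M₃ * C ^ 3 * α) * α ^ 2 := by rw [hrdef]; ring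
      _ ≤ (8 * K ^ 2 / c) * α ^ 2 := h
      _ = 8 * (K ^ 2 / c * α ^ 2) := by ring
  have hpos : 0 < K ^ 2 / c * α ^ 2 := by positivity
  linarith [habs, hAv, hBvv, e1, e2, e3, hpos]


/-- Deterministic core of the proof of Theorem 6 of the paper: a third-order Taylor
expansion around a strict local maximizer `θ₀` of `L` yields, for the perturbed
objective `L̃`, a local maximizer within distance `C·α` of `θ₀`, with constants
depending only on `c`, `K`, `M₁`, `M₂` and `ρ`. -/
theorem empirical_local_max_rate (c K M₁ M₂ ρ : ℝ)
    (hc : 0 < c) (hK : 0 < K) (hρ : 0 < ρ) :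
    ∃ C > (0 : ℝ), ∃ α₀ > (0 : ℝ),
      ∀ (q : ℕ) (θ₀ : EuclideanSpace ℝ (Fin q))
        (L Lt : EuclideanSpace ℝ (Fin q) → ℝ) (α : ℝ),
        ContDiffOn ℝ 3 L (closedBall θ₀ ρ) →
        ContDiffOn ℝ 3 Lt (closedBall θ₀ ρ) →
        fderiv ℝ L θ₀ = 0 →
        (∀ u : EuclideanSpace ℝ (Fin q),
          (iteratedFDeriv ℝ 2 L θ₀) ![u, u] ≤ -c * ‖u‖ ^ 2) →
        ‖iteratedFDeriv ℝ 2 Lt θ₀ - iteratedFDeriv ℝ 2 L θ₀‖ ≤ c / 4 →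
        (∀ θ ∈ closedBall θ₀ ρ, ‖iteratedFDeriv ℝ 3 L θ‖ ≤ M₁) →
        (∀ θ ∈ closedBall θ₀ ρ,
          ‖iteratedFDeriv ℝ 3 (fun x => L x - Lt x) θ‖ ≤ M₂) →
        0 < α → α ≤ α₀ → ‖fderiv ℝ Lt θ₀‖ ≤ K * α →
        (∀ u : EuclideanSpace ℝ (Fin q), ‖u‖ = C → Lt (θ₀ + α • u) < Lt θ₀) ∧
        ∃ θhat : EuclideanSpace ℝ (Fin q),
          ‖θhat - θ₀‖ ≤ C * α ∧ IsLocalMax Lt θhat := by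
  have hC0 : (0:ℝ) < 8 * K / c := by positivity
  have hden : (0:ℝ) < (max (M₁ + M₂) 0) * (8 * K / c) ^ 3 + 1 := by positivity
  refine ⟨8 * K / c, hC0,
    min (ρ * c / (16 * K)) ((8 * K ^ 2 / c) / ((max (M₁ + M₂) 0) * (8 * K / c) ^ 3 + 1)),
    lt_min (by positivity) (by positivity), ?_⟩
  intro q θ₀ L Lt α hL hLt _hgradL hHess hHd hM₁ hM₂ hα hαle hgrad
  have hαρ : α * (8 * K / c) ≤ ρ / 2 := by
    have h1 : α ≤ ρ * c / (16 * K) := le_trans hαle (min_le_left _ _)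
    calc α * (8 * K / c) ≤ (ρ * c / (16 * K)) * (8 * K / c) :=
          mul_le_mul_of_nonneg_right h1 hC0.le
      _ = ρ / 2 := by field_simp; ring
  have hαM : (max (M₁ + M₂) 0) * (8 * K / c) ^ 3 * α ≤ 8 * K ^ 2 / c := by
    have h2 : α ≤ (8 * K ^ 2 / c) / ((max (M₁ + M₂) 0) * (8 * K / c) ^ 3 + 1) :=
      le_trans hαle (min_le_right _ _)
    have h3 : α * ((max (M₁ + M₂) 0) * (8 * K / c) ^ 3 + 1) ≤ 8 * K ^ 2 / c :=
      (le_div_iff₀ hden).mp h2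
    nlinarith [hα]
  have hdecr : ∀ v : EuclideanSpace ℝ (Fin q), ‖v‖ = α * (8 * K / c) →
      Lt (θ₀ + v) < Lt θ₀ := fun v hv =>
    sphere_decrease hc hK hρ hL hLt hHess hHd hM₁ hM₂ hα hαρ hαM hgrad hv
  constructor
  · intro u hu
    exact hdecr (α • u) (by rw [norm_smul, hu, Real.norm_eq_abs, abs_of_pos hα])
  · set r : ℝ := 8 * K / c * α with hrdef
    have hr0 : 0 < r := by positivity
    have hrρ : r ≤ ρ := by
      have : α * (8 * K / c) = r := by rw [hrdef]; ring
      linarith [hαρ, this.symm ▸ hαρ]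
    have hcomp : IsCompact (closedBall θ₀ r) := isCompact_closedBall θ₀ r
    have hne : (closedBall θ₀ r).Nonempty := ⟨θ₀, mem_closedBall_self hr0.le⟩
    have hcont : ContinuousOn Lt (closedBall θ₀ r) :=
      hLt.continuousOn.mono (closedBall_subset_closedBall hrρ)
    obtain ⟨θhat, hθmem, hmax⟩ := hcomp.exists_isMaxOn hne hcont
    refine ⟨θhat, ?_, ?_⟩
    · rw [← dist_eq_norm]; exact mem_closedBall.mp hθmem
    · have hlt : dist θhat θ₀ < r := by
        rcases lt_or_eq_of_le (mem_closedBall.mp hθmem) with h | h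
        · exact h
        · exfalso
          have hnv : ‖θhat - θ₀‖ = r := by rw [← dist_eq_norm]; exact h
          have hx : θ₀ + (θhat - θ₀) = θhat := by abel
          have hv' : ‖θhat - θ₀‖ = α * (8 * K / c) := by rw [hnv, hrdef]; ring
          have hcontra := hdecr (θhat - θ₀) hv'
          rw [hx] at hcontra
          exact absurd (hmax (mem_closedBall_self hr0.le)) (not_le.mpr hcontra)
      have hball : closedBall θ₀ r ∈ nhds θhat :=
        Filter.mem_of_superset (isOpen_ball.mem_nhds (mem_ball.mpr hlt)) ball_subset_closedBall
      exact hmax.isLocalMax hball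
end
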